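/- Let E be a real inner product space of dimension n + 1 with n ≥ 2, and let e₁ and ν be two orthonormal vectors in E; let S = ν^⊥ be the hyperplane orthogonal to ν. Let P be an n-dimensional subspace of E that is not contained in S. Then there exist orthonormal vectors e₂, …, e_n spanning the orthogonal complement of span{e₁, ν}, an index k ∈ {2, …, n}, unit vectors v₀, v₁ ∈ span{e₁, e_k} with ⟨v₀, v₁⟩ = 0, and an angle β ∈ (0, π/2], such that the family consisting of v₁, the vectors e_i for 2 ≤ i ≤ n with i ≠ k, and v_n := cosβ·v₀ + sinβ·ν is an orthonormal basis of P. -/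

import Mathlib

set_option maxHeartbeats 1000000

open Module Submodule

theorem stmt_6 {E : Type*} [NormedAddCommGroup E] [InnerProductSpace ℝ E]
    [FiniteDimensional ℝ E]
    (n : ℕ) (hn : 2 ≤ n) (hdim : Module.finrank ℝ E = n + 1)
    (e₁ ν : E) (he₁ : ‖e₁‖ = 1) (hν : ‖ν‖ = 1) (he₁ν : (inner ℝ e₁ ν : ℝ) = 0)
    (S : Submodule ℝ E) (hS : S = (ℝ ∙ ν)ᗮ)
    (P : Submodule ℝ E) (hP : Module.finrank ℝ P = n) (hPS : ¬ P ≤ S) :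
    ∃ (e : ℕ → E) (k : ℕ) (v₀ v₁ : E) (β : ℝ),
      (∀ i ∈ Finset.Icc 2 n, ∀ j ∈ Finset.Icc 2 n,
        (inner ℝ (e i) (e j) : ℝ) = if i = j then 1 else 0) ∧
      Submodule.span ℝ (e '' Set.Icc 2 n) = (Submodule.span ℝ {e₁, ν})ᗮ ∧
      k ∈ Finset.Icc 2 n ∧
      v₀ ∈ Submodule.span ℝ ({e₁, e k} : Set E) ∧
      v₁ ∈ Submodule.span ℝ ({e₁, e k} : Set E) ∧
      ‖v₀‖ = 1 ∧ ‖v₁‖ = 1 ∧ (inner ℝ v₀ v₁ : ℝ) = 0 ∧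
      β ∈ Set.Ioc 0 (Real.pi / 2) ∧
      (∀ g : ℕ → E,
        (g = fun i => if i = 1 then v₁ else if i = k then
          Real.cos β • v₀ + Real.sin β • ν else e i) →
        (∀ i ∈ Finset.Icc 1 n, ∀ j ∈ Finset.Icc 1 n,
          (inner ℝ (g i) (g j) : ℝ) = if i = j then 1 else 0) ∧
        Submodule.span ℝ (g '' Set.Icc 1 n) = P) := by
  classical
  have hν1 : (inner ℝ ν ν : ℝ) = 1 := by
    rw [real_inner_self_eq_norm_sq, hν]; norm_num
  have he11 : (inner ℝ e₁ e₁ : ℝ) = 1 := by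
    rw [real_inner_self_eq_norm_sq, he₁]; norm_num
  have hνe₁ : (inner ℝ ν e₁ : ℝ) = 0 := by rw [real_inner_comm]; exact he₁ν
  -- Step 1: unit normal u₀ of P
  have horth : finrank ℝ P + finrank ℝ Pᗮ = n + 1 := by
    rw [← hdim]; exact P.finrank_add_finrank_orthogonal
  have hPo : finrank ℝ Pᗮ = 1 := by omega
  obtain ⟨u₀, hu₀n, hu₀sp⟩ : ∃ u : E, ‖u‖ = 1 ∧ Pᗮ = span ℝ {u} := by
    let ob := (stdOrthonormalBasis ℝ Pᗮ).reindex (finCongr hPo)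
    refine ⟨(ob 0 : E), by exact ob.orthonormal.1 0, ?_⟩
    have h1 : span ℝ (Subtype.val '' Set.range ob) = Pᗮ := by
      rw [← Submodule.coe_subtype, Submodule.span_image]
      have : span ℝ (Set.range ⇑ob) = ⊤ := by
        rw [← ob.coe_toBasis]; exact ob.toBasis.span_eq
      rw [this, Submodule.map_subtype_top]
    refine h1.symm.trans ?_
    congr 1
    rw [Set.range_unique]
    simp
  have hu₀mem : ∀ x, x ∈ P ↔ (inner ℝ u₀ x : ℝ) = 0 := by
    intro x
    conv_lhs => rw [← Submodule.orthogonal_orthogonal P]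
    rw [hu₀sp]
    exact Submodule.mem_orthogonal_singleton_iff_inner_right
  -- WLOG ⟪u, ν⟫ ≤ 0
  obtain ⟨u, hun, humem, hbneg⟩ :
      ∃ u : E, ‖u‖ = 1 ∧ (∀ x, x ∈ P ↔ (inner ℝ u x : ℝ) = 0) ∧ (inner ℝ u ν : ℝ) ≤ 0 := by
    rcases le_or_gt (inner ℝ u₀ ν : ℝ) 0 with h | h
    · exact ⟨u₀, hu₀n, hu₀mem, h⟩
    · refine ⟨-u₀, by simpa using hu₀n, fun x => ?_, ?_⟩
      · rw [hu₀mem x, inner_neg_left, neg_eq_zero]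
      · rw [inner_neg_left]; linarith only [h]
  set b : ℝ := inner ℝ u ν with hb_def
  set w' : E := u - b • ν with hw'_def
  have hw'ν : (inner ℝ w' ν : ℝ) = 0 := by
    simp [hw'_def, inner_sub_left, inner_smul_left, hν1, hν, hb_def]
  have hu_eq : u = w' + b • ν := by simp [hw'_def]
  set a : ℝ := ‖w'‖ with ha_def
  have ha0 : 0 ≤ a := norm_nonneg _
  have hab : a ^ 2 + b ^ 2 = 1 := by
    have h := norm_add_sq_real w' (b • ν)
    rw [← hu_eq, hun] at h
    have h2 : (inner ℝ w' (b • ν) : ℝ) = 0 := by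
      rw [inner_smul_right, hw'ν, mul_zero]
    rw [h2] at h
    have h3 : ‖b • ν‖ = |b| := by rw [norm_smul, hν, mul_one]; rfl
    rw [h3, sq_abs] at h
    linarith only [h]
  have hSmem : ∀ x, x ∈ S ↔ (inner ℝ ν x : ℝ) = 0 := by
    intro x; rw [hS]; exact Submodule.mem_orthogonal_singleton_iff_inner_right
  have hapos : 0 < a := by
    rcases ha0.lt_or_eq with h | h; · exact h
    exfalso
    have hw'0 : w' = 0 := by rwa [← norm_eq_zero, ← ha_def, eq_comm]
    rw [hw'0, norm_zero] at ha_def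
    rw [ha_def] at hab
    have hb2 : b ^ 2 = 1 := by linarith only [hab]
    have hb0 : b ≠ 0 := by intro h0; rw [h0] at hb2; norm_num at hb2
    refine hPS fun x hx => ?_
    rw [hSmem]
    have := (humem x).1 hx
    rw [hu_eq, hw'0, zero_add, inner_smul_left] at this
    have : b * (inner ℝ ν x : ℝ) = 0 := this
    exact (mul_eq_zero.1 this).resolve_left hb0
  set w : E := a⁻¹ • w' with hw_def
  have hw'w : w' = a • w := by
    rw [hw_def, smul_inv_smul₀ hapos.ne']
  have hwnorm : ‖w‖ = 1 := by
    rw [hw_def, norm_smul, ← ha_def, Real.norm_eq_abs, abs_inv, abs_of_pos hapos,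
      inv_mul_cancel₀ hapos.ne']
  have hwν : (inner ℝ w ν : ℝ) = 0 := by
    rw [hw_def, inner_smul_left, hw'ν, mul_zero]
  have hνw : (inner ℝ ν w : ℝ) = 0 := by rw [real_inner_comm]; exact hwν
  have hww : (inner ℝ w w : ℝ) = 1 := by
    rw [real_inner_self_eq_norm_sq, hwnorm]; norm_num
  have hu_exp : u = a • w + b • ν := by rw [hu_eq, hw'w]
  -- decompose w over e₁ and T
  set c : ℝ := inner ℝ e₁ w with hc_def
  set w₂ : E := w - c • e₁ with hw₂_def
  have hw₂e₁ : (inner ℝ e₁ w₂ : ℝ) = 0 := by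
    simp [hw₂_def, inner_sub_right, inner_smul_right, he11, hc_def, he₁]
  have hw₂ν : (inner ℝ ν w₂ : ℝ) = 0 := by
    simp [hw₂_def, inner_sub_right, inner_smul_right, hνe₁, hνw]
  set s : ℝ := ‖w₂‖ with hs_def
  have hs0 : 0 ≤ s := norm_nonneg _
  have hw_dec : w = c • e₁ + w₂ := by simp [hw₂_def]
  have hcs : c ^ 2 + s ^ 2 = 1 := by
    have h := norm_add_sq_real (c • e₁) w₂
    rw [← hw_dec, hwnorm] at h
    have h2 : (inner ℝ (c • e₁) w₂ : ℝ) = 0 := by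
      rw [inner_smul_left, hw₂e₁, mul_zero]
    have h3 : ‖c • e₁‖ = |c| := by rw [norm_smul, he₁, mul_one]; rfl
    rw [h2, h3, sq_abs] at h
    linarith only [h]
  -- the subspace T
  set K : Submodule ℝ E := Submodule.span ℝ ({e₁, ν} : Set E) with hK_def
  have hmemT : ∀ x : E, x ∈ Kᗮ ↔ (inner ℝ e₁ x : ℝ) = 0 ∧ (inner ℝ ν x : ℝ) = 0 := by
    intro x
    constructor
    · intro hx
      exact ⟨(Submodule.mem_orthogonal K x).1 hx e₁ (subset_span (by simp)),
        (Submodule.mem_orthogonal K x).1 hx ν (subset_span (by simp))⟩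
    · rintro ⟨h1, h2⟩
      rw [Submodule.mem_orthogonal]
      intro y hy
      induction hy using Submodule.span_induction with
      | mem y hy =>
        rcases hy with rfl | rfl
        · exact h1
        · exact h2
      | zero => simp
      | add y z _ _ hy hz => rw [inner_add_left, hy, hz, add_zero]
      | smul t y _ hy => rw [inner_smul_left, hy, mul_zero]
  have hKrank : finrank ℝ K = 2 := by
    have hli : LinearIndependent ℝ ![e₁, ν] := by
      rw [LinearIndependent.pair_iff]
      intro s t hst
      constructor
      · have := congrArg (fun x => (inner ℝ e₁ x : ℝ)) hst
        simpa [inner_add_right, inner_smul_right, he11, he₁ν, (show e₁ ≠ 0 by rintro rfl; simp at he₁)] using this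
      · have := congrArg (fun x => (inner ℝ ν x : ℝ)) hst
        simpa [inner_add_right, inner_smul_right, hν1, hνe₁, (show ν ≠ 0 by rintro rfl; simp at hν)] using this
    have hset : ({e₁, ν} : Set E) = Set.range ![e₁, ν] := by
      simp [Matrix.range_cons, Matrix.range_empty, Set.pair_comm]
    rw [hK_def, hset, finrank_span_eq_card hli]
    simp
  have hTrank : finrank ℝ Kᗮ = n - 1 := by
    have := K.finrank_add_finrank_orthogonal
    rw [hKrank, hdim] at this
    omega
  have hn1 : 0 < n - 1 := by omega
  -- orthonormal basis of Kᗮ adapted to w₂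
  obtain ⟨f, hf0⟩ : ∃ f : OrthonormalBasis (Fin (n - 1)) ℝ Kᗮ,
      s • ((f ⟨0, hn1⟩ : Kᗮ) : E) = w₂ := by
    rcases eq_or_ne s 0 with hs | hs
    · have hw₂0 : w₂ = 0 := by rwa [← norm_eq_zero, ← hs_def]
      exact ⟨(stdOrthonormalBasis ℝ Kᗮ).reindex (finCongr hTrank),
        by rw [hs, zero_smul, hw₂0]⟩
    · have hw₂T : w₂ ∈ Kᗮ := (hmemT w₂).2 ⟨hw₂e₁, hw₂ν⟩
      have hmem2 : s⁻¹ • w₂ ∈ Kᗮ := Submodule.smul_mem _ _ hw₂T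
      set v : Fin (n - 1) → Kᗮ := fun _ => ⟨s⁻¹ • w₂, hmem2⟩ with hv_def
      have hcard : finrank ℝ Kᗮ = Fintype.card (Fin (n - 1)) := by simp [hTrank]
      have hvn : (inner ℝ (s⁻¹ • w₂) (s⁻¹ • w₂) : ℝ) = 1 := by
        rw [real_inner_smul_left, real_inner_smul_right, real_inner_self_eq_norm_sq, ← hs_def]
        field_simp
      have hon : Orthonormal ℝ (({⟨0, hn1⟩} : Set (Fin (n - 1))).restrict v) := by
        rw [orthonormal_iff_ite]
        intro i j
        have hij : i = j := Subtype.ext (by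
          have hi := i.2; have hj := j.2
          simp only [Set.mem_singleton_iff] at hi hj
          rw [hi, hj])
        subst hij
        simp only [if_pos rfl]
        show (inner ℝ (v i.1) (v i.1) : ℝ) = 1
        rw [Submodule.coe_inner]
        exact hvn
      obtain ⟨f, hf⟩ := hon.exists_orthonormalBasis_extension_of_card_eq hcard
      refine ⟨f, ?_⟩
      rw [hf ⟨0, hn1⟩ (Set.mem_singleton _)]
      show s • (s⁻¹ • w₂) = w₂
      rw [smul_inv_smul₀ hs]
  -- the family e
  set e : ℕ → E := fun i => if h : i - 2 < n - 1 then ((f ⟨i - 2, h⟩ : Kᗮ) : E) else 0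
    with he_def
  have hfon : ∀ i j : Fin (n - 1),
      (inner ℝ ((f i : Kᗮ) : E) ((f j : Kᗮ) : E) : ℝ) = if i = j then 1 else 0 := by
    intro i j
    have h := orthonormal_iff_ite.mp f.orthonormal i j
    rwa [Submodule.coe_inner] at h
  have hfT : ∀ i : Fin (n - 1), ((f i : Kᗮ) : E) ∈ Kᗮ := fun i => (f i).2
  have he_orth : ∀ i ∈ Finset.Icc 2 n, ∀ j ∈ Finset.Icc 2 n,
      (inner ℝ (e i) (e j) : ℝ) = if i = j then 1 else 0 := by
    intro i hi j hj
    simp only [Finset.mem_Icc] at hi hj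
    have hi' : i - 2 < n - 1 := by omega
    have hj' : j - 2 < n - 1 := by omega
    simp only [he_def, dif_pos hi', dif_pos hj']
    rw [hfon]
    by_cases h : i = j
    · subst h; simp
    · rw [if_neg h, if_neg]
      rw [Fin.mk_eq_mk]
      omega
  have he_img : e '' Set.Icc 2 n = Subtype.val '' Set.range f := by
    ext x
    constructor
    · rintro ⟨i, hi, rfl⟩
      rw [Set.mem_Icc] at hi
      have hi' : i - 2 < n - 1 := by omega
      exact ⟨f ⟨i - 2, hi'⟩, ⟨_, rfl⟩, by simp [he_def, dif_pos hi']⟩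
    · rintro ⟨y, ⟨m, rfl⟩, rfl⟩
      refine ⟨m.1 + 2, ?_, ?_⟩
      · rw [Set.mem_Icc]
        have := m.2
        omega
      · have h' : m.1 + 2 - 2 < n - 1 := by simp [m.2]
        simp only [he_def, dif_pos h']
        have hm : (⟨m.1 + 2 - 2, h'⟩ : Fin (n - 1)) = m := by ext; simp
        rw [hm]
  have he_span : span ℝ (e '' Set.Icc 2 n) = Kᗮ := by
    rw [he_img, ← Submodule.coe_subtype, Submodule.span_image]
    have : span ℝ (Set.range ⇑f) = ⊤ := by
      rw [← f.coe_toBasis]; exact f.toBasis.span_eq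
    rw [this, Submodule.map_subtype_top]
  -- e2 facts
  set e2 : E := ((f ⟨0, hn1⟩ : Kᗮ) : E) with he2_def
  have he_two : e 2 = e2 := by
    simp only [he_def]
    rw [dif_pos (by omega : 2 - 2 < n - 1)]
  have hw₂e2 : w₂ = s • e2 := hf0.symm
  have hw_e : w = c • e₁ + s • e2 := by rw [hw_dec, hw₂e2]
  have he₁e2 : (inner ℝ e₁ e2 : ℝ) = 0 := ((hmemT e2).1 (hfT _)).1
  have hνe2 : (inner ℝ ν e2 : ℝ) = 0 := ((hmemT e2).1 (hfT _)).2
  have he2e₁ : (inner ℝ e2 e₁ : ℝ) = 0 := by rw [real_inner_comm]; exact he₁e2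
  have he2ν : (inner ℝ e2 ν : ℝ) = 0 := by rw [real_inner_comm]; exact hνe2
  have he2e2 : (inner ℝ e2 e2 : ℝ) = 1 := by
    rw [he2_def, hfon]; simp
  -- facts about e i for 3 ≤ i
  have hei : ∀ i, 3 ≤ i → i ≤ n →
      (inner ℝ e₁ (e i) : ℝ) = 0 ∧ (inner ℝ ν (e i) : ℝ) = 0 ∧ (inner ℝ e2 (e i) : ℝ) = 0 := by
    intro i h3 hn'
    have hi' : i - 2 < n - 1 := by omega
    have hT : e i ∈ Kᗮ := by
      simp only [he_def, dif_pos hi']; exact hfT _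
    obtain ⟨h1, h2⟩ := (hmemT _).1 hT
    refine ⟨h1, h2, ?_⟩
    rw [he2_def]
    simp only [he_def, dif_pos hi']
    rw [hfon, if_neg]
    rw [Fin.mk_eq_mk]
    omega
  -- clear hPS etc so linarith-family tactics work
  clear hPS hSmem hS
  -- the vectors v₁ and vβ
  set v₁ : E := (-s) • e₁ + c • e2 with hv₁_def
  have hv₁v₁ : (inner ℝ v₁ v₁ : ℝ) = 1 := by
    rw [hv₁_def]
    simp only [inner_add_left, inner_add_right, inner_smul_left, inner_smul_right,
      he11, he₁e2, he2e₁, he2e2, conj_trivial]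
    ring_nf
    linarith only [hcs]
  have hwv₁ : (inner ℝ w v₁ : ℝ) = 0 := by
    rw [hv₁_def, hw_e]
    simp only [inner_add_left, inner_add_right, inner_smul_left, inner_smul_right,
      he11, he₁e2, he2e₁, he2e2, conj_trivial]
    ring
  have hv₁w : (inner ℝ v₁ w : ℝ) = 0 := by rw [real_inner_comm]; exact hwv₁
  have hνv₁ : (inner ℝ ν v₁ : ℝ) = 0 := by
    rw [hv₁_def]
    simp only [inner_add_right, inner_smul_right, hνe₁, hνe2, conj_trivial]
    ring
  have hv₁ν : (inner ℝ v₁ ν : ℝ) = 0 := by rw [real_inner_comm]; exact hνv₁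
  have hv₁norm : ‖v₁‖ = 1 := by
    have h := hv₁v₁
    rw [real_inner_self_eq_norm_sq] at h
    rw [← Real.sqrt_sq (norm_nonneg v₁), h, Real.sqrt_one]
  -- the angle β
  have hblt : b ^ 2 < 1 := by
    have ha2 : 0 < a ^ 2 := pow_pos hapos 2
    linarith only [hab, ha2]
  have hbm : -1 < b := by
    have h1 : |b| < 1 := (sq_lt_one_iff_abs_lt_one b).mp hblt
    linarith only [(abs_lt.mp h1).1]
  have ha1 : a ≤ 1 := by
    have h1 : a ^ 2 ≤ 1 := by linarith only [hab, sq_nonneg b]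
    have h2 : |a| ≤ 1 := (sq_le_one_iff_abs_le_one a).mp h1
    calc a ≤ |a| := le_abs_self a
    _ ≤ 1 := h2
  set β : ℝ := Real.arccos (-b) with hβ_def
  have hcosβ : Real.cos β = -b := Real.cos_arccos (by linarith) (by linarith)
  have hsinβ : Real.sin β = a := by
    rw [hβ_def, Real.sin_arccos]
    have h1 : 1 - (-b) ^ 2 = a ^ 2 := by ring_nf; linarith only [hab]
    rw [h1, Real.sqrt_sq ha0]
  have hβIoc : β ∈ Set.Ioc 0 (Real.pi / 2) :=
    ⟨Real.arccos_pos.2 (by linarith), Real.arccos_le_pi_div_two.2 (by linarith)⟩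
  -- the vector vβ
  set vβ : E := Real.cos β • w + Real.sin β • ν with hvβ_def
  have hvβvβ : (inner ℝ vβ vβ : ℝ) = 1 := by
    rw [hvβ_def]
    simp only [inner_add_left, inner_add_right, inner_smul_left, inner_smul_right,
      hww, hwν, hνw, hν1, conj_trivial]
    ring_nf
    rw [Real.cos_sq_add_sin_sq]
  have hv₁vβ : (inner ℝ v₁ vβ : ℝ) = 0 := by
    rw [hvβ_def]
    simp only [inner_add_right, inner_smul_right, hv₁w, hv₁ν, conj_trivial]
    ring
  have hvβv₁ : (inner ℝ vβ v₁ : ℝ) = 0 := by rw [real_inner_comm]; exact hv₁vβ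
  -- inner products with e i, 3 ≤ i
  have hwe : ∀ j, 3 ≤ j → j ≤ n → (inner ℝ w (e j) : ℝ) = 0 := by
    intro j h3 hjn
    obtain ⟨h1, h2, h3'⟩ := hei j h3 hjn
    rw [hw_e]
    simp only [inner_add_left, inner_smul_left, h1, h3', conj_trivial]
    ring
  have hv₁e : ∀ j, 3 ≤ j → j ≤ n → (inner ℝ v₁ (e j) : ℝ) = 0 := by
    intro j h3 hjn
    obtain ⟨h1, h2, h3'⟩ := hei j h3 hjn
    rw [hv₁_def]
    simp only [inner_add_left, inner_smul_left, h1, h3', conj_trivial]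
    ring
  have hev₁ : ∀ j, 3 ≤ j → j ≤ n → (inner ℝ (e j) v₁ : ℝ) = 0 := by
    intro j h3 hjn; rw [real_inner_comm]; exact hv₁e j h3 hjn
  have hvβe : ∀ j, 3 ≤ j → j ≤ n → (inner ℝ vβ (e j) : ℝ) = 0 := by
    intro j h3 hjn
    obtain ⟨h1, h2, h3'⟩ := hei j h3 hjn
    rw [hvβ_def]
    simp only [inner_add_left, inner_smul_left, hwe j h3 hjn, h2,
      conj_trivial]
    ring
  have hevβ : ∀ j, 3 ≤ j → j ≤ n → (inner ℝ (e j) vβ : ℝ) = 0 := by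
    intro j h3 hjn; rw [real_inner_comm]; exact hvβe j h3 hjn
  -- the final family gf
  set gf : ℕ → E := fun i => if i = 1 then v₁ else if i = 2 then vβ else e i with hgf_def
  have hgf1 : gf 1 = v₁ := by simp [hgf_def]
  have hgf2 : gf 2 = vβ := by simp [hgf_def]
  have hgfe : ∀ i, i ≠ 1 → i ≠ 2 → gf i = e i := by
    intro i h1 h2; simp [hgf_def, h1, h2]
  have hg_on : ∀ i ∈ Finset.Icc 1 n, ∀ j ∈ Finset.Icc 1 n,
      (inner ℝ (gf i) (gf j) : ℝ) = if i = j then 1 else 0 := by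
    intro i hi j hj
    rw [Finset.mem_Icc] at hi hj
    rcases eq_or_ne i 1 with rfl | hi1
    · rcases eq_or_ne j 1 with rfl | hj1
      · rw [hgf1, if_pos rfl]; exact hv₁v₁
      · rcases eq_or_ne j 2 with rfl | hj2
        · rw [hgf1, hgf2, if_neg (by omega)]; exact hv₁vβ
        · rw [hgf1, hgfe j hj1 hj2, if_neg (by omega)]
          exact hv₁e j (by omega) hj.2
    · rcases eq_or_ne i 2 with rfl | hi2
      · rcases eq_or_ne j 1 with rfl | hj1
        · rw [hgf2, hgf1, if_neg (by omega)]; exact hvβv₁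
        · rcases eq_or_ne j 2 with rfl | hj2
          · rw [hgf2, if_pos rfl]; exact hvβvβ
          · rw [hgf2, hgfe j hj1 hj2, if_neg (by omega)]
            exact hvβe j (by omega) hj.2
      · rcases eq_or_ne j 1 with rfl | hj1
        · rw [hgfe i hi1 hi2, hgf1, if_neg (by omega)]
          exact hev₁ i (by omega) hi.2
        · rcases eq_or_ne j 2 with rfl | hj2
          · rw [hgfe i hi1 hi2, hgf2, if_neg (by omega)]
            exact hevβ i (by omega) hi.2
          · rw [hgfe i hi1 hi2, hgfe j hj1 hj2]
            exact he_orth i (Finset.mem_Icc.2 ⟨by omega, hi.2⟩)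
              j (Finset.mem_Icc.2 ⟨by omega, hj.2⟩)
  -- membership in P
  have hGP : ∀ i ∈ Finset.Icc 1 n, gf i ∈ P := by
    intro i hi
    rw [Finset.mem_Icc] at hi
    rw [humem]
    rcases eq_or_ne i 1 with rfl | hi1
    · rw [hgf1, hu_exp]
      simp only [inner_add_left, inner_smul_left, hwv₁, hνv₁, conj_trivial]
      ring
    · rcases eq_or_ne i 2 with rfl | hi2
      · rw [hgf2, hu_exp, hvβ_def]
        simp only [inner_add_left, inner_add_right, inner_smul_left, inner_smul_right,
          hww, hwν, hνw, hν1, conj_trivial]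
        rw [hcosβ, hsinβ]
        ring
      · rw [hgfe i hi1 hi2, hu_exp]
        obtain ⟨h1, h2, h3'⟩ := hei i (by omega) hi.2
        simp only [inner_add_left, inner_smul_left, hwe i (by omega) hi.2, h2,
          conj_trivial]
        ring
  -- the span
  set G : Fin n → E := fun j => gf (j.1 + 1) with hG_def
  have hGon : Orthonormal ℝ G := by
    rw [orthonormal_iff_ite]
    intro i j
    have h1 : i.1 + 1 ∈ Finset.Icc 1 n := Finset.mem_Icc.2 ⟨by omega, by have := i.2; omega⟩
    have h2 : j.1 + 1 ∈ Finset.Icc 1 n := Finset.mem_Icc.2 ⟨by omega, by have := j.2; omega⟩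
    have h := hg_on _ h1 _ h2
    rw [hG_def]
    simp only []
    rw [h]
    by_cases hc : i = j
    · subst hc; simp
    · rw [if_neg (by intro hcc; exact hc (by ext; omega)), if_neg hc]
  have hrange : Set.range G = gf '' Set.Icc 1 n := by
    ext x
    constructor
    · rintro ⟨j, rfl⟩
      exact ⟨j.1 + 1, Set.mem_Icc.2 ⟨by omega, by have := j.2; omega⟩, rfl⟩
    · rintro ⟨i, hi, rfl⟩
      rw [Set.mem_Icc] at hi
      refine ⟨⟨i - 1, by omega⟩, ?_⟩
      simp only [hG_def]
      congr 1
      omega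
  have hle : span ℝ (gf '' Set.Icc 1 n) ≤ P := by
    rw [Submodule.span_le]
    rintro x ⟨i, hi, rfl⟩
    rw [Set.mem_Icc] at hi
    exact hGP i (Finset.mem_Icc.2 ⟨hi.1, hi.2⟩)
  have hg_span : span ℝ (gf '' Set.Icc 1 n) = P := by
    apply Submodule.eq_of_le_of_finrank_le hle
    rw [hP, ← hrange, finrank_span_eq_card hGon.linearIndependent]
    simp
  -- assemble
  refine ⟨e, 2, w, v₁, β, he_orth, ?_, ?_, ?_, ?_, hwnorm, hv₁norm, hwv₁, hβIoc, ?_⟩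
  · exact he_span
  · exact Finset.mem_Icc.2 ⟨le_refl 2, hn⟩
  · rw [he_two, hw_e]
    exact add_mem (Submodule.smul_mem _ _ (Submodule.subset_span (by simp)))
      (Submodule.smul_mem _ _ (Submodule.subset_span (by simp)))
  · rw [he_two, hv₁_def]
    exact add_mem (Submodule.smul_mem _ _ (Submodule.subset_span (by simp)))
      (Submodule.smul_mem _ _ (Submodule.subset_span (by simp)))
  · intro g hg
    have hggf : g = gf := by
      rw [hg, hgf_def]
    rw [hggf]
    exact ⟨hg_on, hg_span⟩
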